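/- Monotonicity in the inverse temperature: for every N ≥ 1 and every loop γ supported in B_N with 𝒞_γ nonempty, the map β ↦ E_{N,β}[W_γ] is nondecreasing on [0,∞); i.e. for all 0 ≤ β₁ ≤ β₂, E_{N,β₁}[W_γ] ≤ E_{N,β₂}[W_γ]. -/
import Mathlib


open scoped Classical

namespace LGT

/-- A site (vertex) of the lattice `ℤ^m`. -/
abbrev Site (m : ℕ) := Fin m → ℤ

/-- The `i`-th unit vector. -/
def unitVec (m : ℕ) (i : Fin m) : Site m := fun j => if j = i then 1 else 0

/-- An oriented nearest-neighbour edge of `ℤ^m`: it joins `base` and `base + e_dir`,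
oriented from `base` to `base + e_dir` when `ori = true`, and oppositely otherwise. -/
structure OEdge (m : ℕ) where
  base : Site m
  dir : Fin m
  ori : Bool
deriving DecidableEq

/-- An oriented plaquette of `ℤ^m` (valid when `dir1 < dir2`): the unit square with
corners `base, base + e_dir1, base + e_dir2, base + e_dir1 + e_dir2`, positively
oriented when `ori = true`. -/
structure OPlaq (m : ℕ) where
  base : Site m
  dir1 : Fin m
  dir2 : Fin m
  ori : Bool
deriving DecidableEq

/-- The same edge with reversed orientation. -/
def OEdge.neg {m : ℕ} (e : OEdge m) : OEdge m := ⟨e.base, e.dir, !e.ori⟩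

/-- The same plaquette with reversed orientation. -/
def OPlaq.neg {m : ℕ} (p : OPlaq m) : OPlaq m := ⟨p.base, p.dir1, p.dir2, !p.ori⟩

/-- The source vertex of an oriented edge. -/
def OEdge.src {m : ℕ} (e : OEdge m) : Site m :=
  if e.ori then e.base else e.base + unitVec m e.dir

/-- The target vertex of an oriented edge. -/
def OEdge.tgt {m : ℕ} (e : OEdge m) : Site m :=
  if e.ori then e.base + unitVec m e.dir else e.base

/-- `x ∈ B_N = [-N,N]^m ∩ ℤ^m`. -/
def inBox (m N : ℕ) (x : Site m) : Prop := ∀ i, |x i| ≤ (N : ℤ)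

/-- `C_1(B_N)`: oriented edges with both endpoints in `B_N`. -/
def C1 (m N : ℕ) : Set (OEdge m) :=
  {e | inBox m N e.base ∧ inBox m N (e.base + unitVec m e.dir)}

/-- The four corners of a plaquette. -/
def OPlaq.corners {m : ℕ} (p : OPlaq m) : List (Site m) :=
  [p.base, p.base + unitVec m p.dir1, p.base + unitVec m p.dir2,
    p.base + unitVec m p.dir1 + unitVec m p.dir2]

/-- The four oriented boundary edges of an oriented plaquette. -/
def OPlaq.bdry {m : ℕ} (p : OPlaq m) : List (OEdge m) :=
  let l : List (OEdge m) :=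
    [⟨p.base, p.dir1, true⟩, ⟨p.base + unitVec m p.dir1, p.dir2, true⟩,
     ⟨p.base + unitVec m p.dir2, p.dir1, false⟩, ⟨p.base, p.dir2, false⟩]
  if p.ori then l else l.map OEdge.neg

/-- `C_2(B_N)`: oriented plaquettes with all corners in `B_N`. -/
def C2 (m N : ℕ) : Set (OPlaq m) :=
  {p | p.dir1 < p.dir2 ∧ ∀ x ∈ p.corners, inBox m N x}

/-- `C_2(B_N)^+`: positively oriented plaquettes of `C_2(B_N)`. -/
def C2plus (m N : ℕ) : Set (OPlaq m) := {p | p ∈ C2 m N ∧ p.ori = true}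

/-- `supp ∂̂e`: the plaquettes of `C_2(B_N)` whose oriented boundary contains `e`. -/
def cob (m N : ℕ) (e : OEdge m) : Set (OPlaq m) := {p | p ∈ C2 m N ∧ e ∈ p.bdry}

/-- A loop: a finitely supported `ℤ`-valued function on oriented edges with values in
`{-1,0,1}`, odd under orientation reversal, whose boundary vanishes as a `0`-chain. -/
structure IsLoop (m : ℕ) (γ : OEdge m → ℤ) : Prop where
  finite_supp : (Function.support γ).Finite
  vals : ∀ e, γ e = -1 ∨ γ e = 0 ∨ γ e = 1
  antisym : ∀ e, γ (OEdge.neg e) = - γ e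
  bdry_zero : ∀ v : Site m,
    (∑ᶠ e : OEdge m, γ e *
      ((if OEdge.tgt e = v then 1 else 0) - (if OEdge.src e = v then (1 : ℤ) else 0))) = 0

/-- A loop supported in `B_N`. -/
def LoopIn (m N : ℕ) (γ : OEdge m → ℤ) : Prop :=
  IsLoop m γ ∧ ∀ e, γ e ≠ 0 → e ∈ C1 m N

/-- `Ω^1(B_N, ℤ₂)`: `ℤ₂`-valued one-forms on `C_1(B_N)`. -/
def Omega1 (m N : ℕ) : Set (OEdge m → ZMod 2) :=
  {σ | (∀ e, e ∉ C1 m N → σ e = 0) ∧ ∀ e, σ (OEdge.neg e) = - σ e}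

/-- The natural representation `ρ(g) = e^{iπ g} ∈ {±1}` of `ℤ₂`. -/
noncomputable def rho (g : ZMod 2) : ℝ := if g = 0 then 1 else -1

/-- The exterior derivative `dσ(p) = Σ_{e ∈ ∂p} σ(e)`. -/
def dOne {m : ℕ} (σ : OEdge m → ZMod 2) (p : OPlaq m) : ZMod 2 := (p.bdry.map σ).sum

/-- The Wilson action `S(σ) = -Σ_{p ∈ C_2(B_N)} ρ(dσ(p))`. -/
noncomputable def action (m N : ℕ) (σ : OEdge m → ZMod 2) : ℝ :=
  - ∑ᶠ p ∈ C2 m N, rho (dOne σ p)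

/-- The Wilson loop variable `W_γ(σ) = Π_{e ∈ (supp γ)^+} ρ(σ(e))`. -/
noncomputable def wilson (m : ℕ) (γ : OEdge m → ℤ) (σ : OEdge m → ZMod 2) : ℝ :=
  ∏ᶠ e ∈ {e : OEdge m | γ e ≠ 0 ∧ e.ori = true}, rho (σ e)

/-- `Z_{β,N}[γ] = Σ_{σ ∈ Ω^1(B_N,ℤ₂)} W_γ(σ) e^{-β S(σ)}`. -/
noncomputable def Z (m N : ℕ) (β : ℝ) (γ : OEdge m → ℤ) : ℝ :=
  ∑ᶠ σ ∈ Omega1 m N, wilson m γ σ * Real.exp (- β * action m N σ)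

/-- The finite-volume Gibbs expectation `E_{N,β}[f]`. -/
noncomputable def Eexp (m N : ℕ) (β : ℝ) (f : (OEdge m → ZMod 2) → ℝ) : ℝ :=
  (∑ᶠ σ ∈ Omega1 m N, f σ * Real.exp (- β * action m N σ)) /
    (∑ᶠ σ ∈ Omega1 m N, Real.exp (- β * action m N σ))

/-- `E_{N,β}[W_γ]`. -/
noncomputable def Ewilson (m N : ℕ) (β : ℝ) (γ : OEdge m → ℤ) : ℝ :=
  Eexp m N β (wilson m γ)

/-- A current: an integer-valued `2`-form on `C_2(B_N)` that is nonnegative on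
positively oriented plaquettes. -/
def IsCurrent (m N : ℕ) (n : OPlaq m → ℤ) : Prop :=
  (∀ p, p ∉ C2 m N → n p = 0) ∧ (∀ p, n (OPlaq.neg p) = - n p) ∧
    (∀ p ∈ C2plus m N, 0 ≤ n p)

/-- `𝒞_γ`: the currents with source `γ`. -/
def CurSet (m N : ℕ) (γ : OEdge m → ℤ) : Set (OPlaq m → ℤ) :=
  {n | IsCurrent m N n ∧ ∀ e ∈ C1 m N,
      ((γ e : ZMod 2) + ∑ᶠ p ∈ cob m N e, ((n p : ZMod 2))) = 0}

/-- The weight `w_β(n) = Π_{p ∈ C_2(B_N)^+} (2β)^{n(p)}/n(p)!` of a current. -/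
noncomputable def wgt (m N : ℕ) (β : ℝ) (n : OPlaq m → ℤ) : ℝ :=
  ∏ᶠ p ∈ C2plus m N, (2 * β) ^ (n p).toNat / (Nat.factorial (n p).toNat)

/-- `q ≤ n` on positively oriented plaquettes. -/
def leOn (m N : ℕ) (q n : OPlaq m → ℤ) : Prop := ∀ p ∈ C2plus m N, q p ≤ n p

/-- `𝒫_γ^{ht}`: `ℤ₂`-valued `2`-forms on `C_2(B_N)` with `δω = γ (mod 2)`. -/
def HTset (m N : ℕ) (γ : OEdge m → ℤ) : Set (OPlaq m → ZMod 2) :=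
  {ω | (∀ p, p ∉ C2 m N → ω p = 0) ∧ (∀ p, ω (OPlaq.neg p) = - ω p) ∧
    ∀ e ∈ C1 m N, (∑ᶠ p ∈ cob m N e, ω p) = (γ e : ZMod 2)}

/-- `(supp ω)^+`. -/
def suppPlus (m N : ℕ) (ω : OPlaq m → ZMod 2) : Set (OPlaq m) :=
  {p | p ∈ C2plus m N ∧ ω p ≠ 0}

/-- The high-temperature weight `(tanh 2β)^{|(supp ω)^+|}`. -/
noncomputable def htWeight (m N : ℕ) (β : ℝ) (ω : OPlaq m → ZMod 2) : ℝ :=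
  Real.tanh (2 * β) ^ (Nat.card ↥(suppPlus m N ω))

/-- The high-temperature model `P^γ_{B_N,β}`: probability mass of `ω ∈ 𝒫_γ^{ht}`. -/
noncomputable def htProb (m N : ℕ) (β : ℝ) (γ : OEdge m → ℤ) (ω : OPlaq m → ZMod 2) : ℝ :=
  htWeight m N β ω / ∑ᶠ ω' ∈ HTset m N γ, htWeight m N β ω'

/-- The random current model `𝐏^γ_{B_N,β}`: probability of an event `A ⊆ 𝒞_γ`. -/
noncomputable def rcProb (m N : ℕ) (β : ℝ) (γ : OEdge m → ℤ) (A : Set (OPlaq m → ℤ)) : ℝ :=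
  (∑' n : ↥(CurSet m N γ ∩ A), wgt m N β n) / (∑' n : ↥(CurSet m N γ), wgt m N β n)

/-- The trace `n̂` of a current: the set of positively oriented plaquettes where `n > 0`. -/
def hatCur (m N : ℕ) (n : OPlaq m → ℤ) : Set (OPlaq m) :=
  {p | p ∈ C2plus m N ∧ 0 < n p}

/-- The probability that iid Bernoulli plaquette percolation `Ψ_q` on `C_2(B_N)^+`
produces exactly the configuration (subset) `A`. -/
noncomputable def bernoulli (m N : ℕ) (q : ℝ) (A : Set (OPlaq m)) : ℝ :=
  ∏ᶠ p ∈ C2plus m N, (if p ∈ A then q else 1 - q)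

/-- `∂P ≡ γ (mod 2)`: for every edge `e ∈ C_1(B_N)` the number of plaquettes of `P`
whose boundary contains `e` or `-e` is congruent to `γ(e)` mod `2`. -/
def BdryCong (m N : ℕ) (P : Set (OPlaq m)) (γ : OEdge m → ℤ) : Prop :=
  ∀ e ∈ C1 m N,
    ((Nat.card ↥{p ∈ P | e ∈ p.bdry ∨ OEdge.neg e ∈ p.bdry} : ZMod 2)) = (γ e : ZMod 2)

/-- `𝒫_γ`: subsets of `C_2(B_N)^+` containing a subset with boundary `γ (mod 2)`. -/
def PlaqSet (m N : ℕ) (γ : OEdge m → ℤ) : Set (Set (OPlaq m)) :=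
  {P | P ⊆ C2plus m N ∧ ∃ P', P' ⊆ P ∧ BdryCong m N P' γ}

/-- `N₀(P)`: the number of `σ ∈ Ω^1(B_N,ℤ₂)` with `dσ(p) = 0` for all `p ∈ P`. -/
noncomputable def N0 (m N : ℕ) (P : Set (OPlaq m)) : ℕ :=
  Nat.card ↥{σ ∈ Omega1 m N | ∀ p ∈ P, dOne σ p = 0}

/-- The random cluster weight `N₀(P) q^{|P|} (1-q)^{|C_2(B_N)^+ ∖ P|}`. -/
noncomputable def rcmWeight (m N : ℕ) (q : ℝ) (P : Set (OPlaq m)) : ℝ :=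
  (N0 m N P : ℝ) * q ^ (Nat.card ↥P) * (1 - q) ^ (Nat.card ↥(C2plus m N \ P))

/-- The random cluster model `φ^γ_{B_N,q}`: probability mass of `P` (zero off `𝒫_γ`). -/
noncomputable def rcmProb (m N : ℕ) (q : ℝ) (γ : OEdge m → ℤ) (P : Set (OPlaq m)) : ℝ :=
  (if P ∈ PlaqSet m N γ then rcmWeight m N q P else 0) /
    ∑ᶠ P' ∈ PlaqSet m N γ, rcmWeight m N q P'

/-- `S_γ(P)`: the subsets of `P` with boundary `γ (mod 2)`. -/
def Sset (m N : ℕ) (γ : OEdge m → ℤ) (P : Set (OPlaq m)) : Set (Set (OPlaq m)) :=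
  {P' | P' ⊆ P ∧ BdryCong m N P' γ}

/-- The `ℤ₂`-valued `2`-form whose support among positively oriented plaquettes is `P'`. -/
noncomputable def formOf {m : ℕ} (P' : Set (OPlaq m)) : OPlaq m → ZMod 2 :=
  fun p => if p ∈ P' ∨ OPlaq.neg p ∈ P' then 1 else 0

/-- The vertices of the support of a loop. -/
def vertsOf (m : ℕ) (γ : OEdge m → ℤ) : Set (Site m) :=
  {x | ∃ e, γ e ≠ 0 ∧ (x = OEdge.src e ∨ x = OEdge.tgt e)}

/-- The graph (`ℓ¹`) distance between two sites of `ℤ^m`. -/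
def distL1 (m : ℕ) (x y : Site m) : ℕ := ∑ i, (x i - y i).natAbs

/-- The minimal graph distance between the supports of two loops. -/
noncomputable def suppDist (m : ℕ) (γ γ' : OEdge m → ℤ) : ℕ :=
  sInf {d | ∃ x ∈ vertsOf m γ, ∃ y ∈ vertsOf m γ', d = distL1 m x y}

/-- `area(γ) = min_{n ∈ 𝒞_γ} Σ_{p ∈ C_2(B_N)^+} n(p)`. -/
noncomputable def areaOf (m N : ℕ) (γ : OEdge m → ℤ) : ℕ :=
  sInf {k : ℕ | ∃ n ∈ CurSet m N γ, (∑ᶠ p ∈ C2plus m N, n p) = (k : ℤ)}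

/-- Translation of a loop by a lattice vector. -/
def translate (m : ℕ) (v : Site m) (γ : OEdge m → ℤ) : OEdge m → ℤ :=
  fun e => γ ⟨e.base - v, e.dir, e.ori⟩

/-- The site `a·e₀ + b·e₁` in the fixed coordinate plane spanned by the first two
coordinate directions. -/
def planeSite (m : ℕ) (h : 1 < m) (a b : ℤ) : Site m :=
  fun j => if j = (⟨0, by omega⟩ : Fin m) then a else if j = (⟨1, h⟩ : Fin m) then b else 0

/-- The axis-parallel rectangular loop `γ_{R,T}` with corners `0, R·e₀, R·e₀+T·e₁, T·e₁`
in the fixed coordinate plane spanned by the first two coordinate directions. -/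
noncomputable def rectLoop (m : ℕ) (h : 1 < m) (R T : ℕ) : OEdge m → ℤ := fun e =>
  (∑ k ∈ Finset.range R,
    ((if e = ⟨planeSite m h k 0, ⟨0, by omega⟩, true⟩ then (1 : ℤ) else 0)
      - (if e = OEdge.neg ⟨planeSite m h k 0, ⟨0, by omega⟩, true⟩ then 1 else 0)
      - (if e = ⟨planeSite m h k T, ⟨0, by omega⟩, true⟩ then 1 else 0)
      + (if e = OEdge.neg ⟨planeSite m h k T, ⟨0, by omega⟩, true⟩ then 1 else 0)))
  + (∑ k ∈ Finset.range T,
    ((if e = ⟨planeSite m h R k, ⟨1, h⟩, true⟩ then (1 : ℤ) else 0)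
      - (if e = OEdge.neg ⟨planeSite m h R k, ⟨1, h⟩, true⟩ then 1 else 0)
      - (if e = ⟨planeSite m h 0 k, ⟨1, h⟩, true⟩ then 1 else 0)
      + (if e = OEdge.neg ⟨planeSite m h 0 k, ⟨1, h⟩, true⟩ then 1 else 0)))


/- ### Auxiliary material for the proof ### -/

/-- A ±1-valued multiplicative character w.r.t. an abstract multiplication. -/
def IsChar {G : Type*} (mul : G → G → G) (χ : G → ℝ) : Prop :=
  (∀ a b, χ (mul a b) = χ a * χ b) ∧ ∀ a, χ a = 1 ∨ χ a = -1

lemma IsChar.one {G : Type*} (mul : G → G → G) : IsChar mul (fun _ => (1 : ℝ)) :=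
  ⟨fun _ _ => by simp, fun _ => Or.inl rfl⟩

lemma IsChar.mul_char {G : Type*} {mul : G → G → G} {χ₁ χ₂ : G → ℝ}
    (h1 : IsChar mul χ₁) (h2 : IsChar mul χ₂) : IsChar mul (fun g => χ₁ g * χ₂ g) := by
  refine ⟨fun a b => ?_, fun a => ?_⟩
  · show χ₁ (mul a b) * χ₂ (mul a b) = χ₁ a * χ₂ a * (χ₁ b * χ₂ b)
    rw [h1.1, h2.1]; ring
  · rcases h1.2 a with h | h <;> rcases h2.2 a with h' | h' <;> simp [h, h']

lemma isChar_prod {G ι : Type*} {mul : G → G → G} (P : Finset ι) (ε : ι → G → ℝ)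
    (hε : ∀ p ∈ P, IsChar mul (ε p)) : IsChar mul (fun g => ∏ p ∈ P, ε p g) := by
  induction P using Finset.induction with
  | empty => simpa using IsChar.one mul
  | @insert a s hx ih =>
    simp only [Finset.prod_insert hx]
    exact IsChar.mul_char (hε a (Finset.mem_insert_self a s))
      (ih fun p hp => hε p (Finset.mem_insert_of_mem hp))

lemma char_sum_nonneg {G : Type*} [Fintype G] {mul : G → G → G}
    (hbij : ∀ a, Function.Bijective (mul a)) {χ : G → ℝ} (hχ : IsChar mul χ) :
    0 ≤ ∑ g, χ g := by
  by_cases h : ∀ g, χ g = 1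
  · simp [h]
  · push_neg at h
    obtain ⟨g₀, hg₀⟩ := h
    have hg₀' : χ g₀ = -1 := (hχ.2 g₀).resolve_left hg₀
    have key : ∑ g, χ g = - ∑ g, χ g := by
      calc ∑ g, χ g = ∑ g, χ (mul g₀ g) :=
            (Fintype.sum_bijective (mul g₀) (hbij g₀) _ _ (fun g => rfl)).symm
        _ = ∑ g, -χ g := by
            refine Finset.sum_congr rfl fun g _ => ?_
            rw [hχ.1, hg₀']; ring
        _ = - ∑ g, χ g := by rw [Finset.sum_neg_distrib]
    linarith

/-- Griffiths' first inequality, abstract form. -/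
lemma griffiths1 {G ι : Type*} [Fintype G] {mul : G → G → G}
    (hbij : ∀ a, Function.Bijective (mul a))
    (P : Finset ι) (ε : ι → G → ℝ) (hε : ∀ p ∈ P, IsChar mul (ε p))
    {w : G → ℝ} (hw : IsChar mul w) (J : ι → ℝ) (hJ : ∀ p ∈ P, 0 ≤ J p) :
    0 ≤ ∑ g, w g * ∏ p ∈ P, Real.exp (J p * ε p g) := by
  have hexp : ∀ g, ∏ p ∈ P, Real.exp (J p * ε p g)
      = ∏ p ∈ P, (Real.sinh (J p) * ε p g + Real.cosh (J p)) := by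
    intro g
    refine Finset.prod_congr rfl fun p hp => ?_
    rcases (hε p hp).2 g with h | h
    · rw [h, mul_one, mul_one, Real.sinh_add_cosh]
    · rw [h, mul_neg_one, mul_neg_one, ← Real.cosh_sub_sinh]; ring
  calc (0:ℝ) ≤ ∑ T ∈ P.powerset,
        ((∏ p ∈ T, Real.sinh (J p)) * ∏ p ∈ P \ T, Real.cosh (J p)) *
          ∑ g, w g * ∏ p ∈ T, ε p g := by
        refine Finset.sum_nonneg fun T hT => ?_
        have hT' : T ⊆ P := Finset.mem_powerset.mp hT
        refine mul_nonneg (mul_nonneg ?_ ?_) ?_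
        · exact Finset.prod_nonneg fun p hp => Real.sinh_zero ▸ Real.sinh_le_sinh.mpr (hJ p (hT' hp))
        · exact Finset.prod_nonneg fun p _ => (Real.cosh_pos _).le
        · exact char_sum_nonneg hbij
            (IsChar.mul_char hw (isChar_prod T ε fun p hp => hε p (hT' hp)))
    _ = ∑ g, w g * ∏ p ∈ P, Real.exp (J p * ε p g) := by
        simp only [hexp, Finset.prod_add, Finset.prod_mul_distrib, Finset.mul_sum]
        rw [Finset.sum_comm]
        exact Finset.sum_congr rfl fun g _ => Finset.sum_congr rfl fun T _ => by ring

/-- Ginibre-style monotonicity in the coupling. -/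
lemma griffiths_mono {G ι : Type*} [Fintype G] {mul : G → G → G}
    (hbij : ∀ a, Function.Bijective (mul a))
    (P : Finset ι) (ε : ι → G → ℝ) (hε : ∀ p ∈ P, IsChar mul (ε p))
    {w : G → ℝ} (hw : IsChar mul w) {β₁ β₂ : ℝ} (h0 : 0 ≤ β₁) (h12 : β₁ ≤ β₂) :
    (∑ g, w g * ∏ p ∈ P, Real.exp (β₁ * ε p g)) * (∑ g, ∏ p ∈ P, Real.exp (β₂ * ε p g))
      ≤ (∑ g, w g * ∏ p ∈ P, Real.exp (β₂ * ε p g)) *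
          (∑ g, ∏ p ∈ P, Real.exp (β₁ * ε p g)) := by
  rw [← sub_nonneg]
  have key : (∑ g, w g * ∏ p ∈ P, Real.exp (β₂ * ε p g)) *
        (∑ g, ∏ p ∈ P, Real.exp (β₁ * ε p g)) -
      (∑ g, w g * ∏ p ∈ P, Real.exp (β₁ * ε p g)) *
        (∑ g, ∏ p ∈ P, Real.exp (β₂ * ε p g))
      = ∑ q, (1 - w q) *
          ∑ σ, w σ * ∏ p ∈ P, Real.exp ((β₂ + β₁ * ε p q) * ε p σ) := by
    have e1 : (∑ g, w g * ∏ p ∈ P, Real.exp (β₂ * ε p g)) *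
          (∑ g, ∏ p ∈ P, Real.exp (β₁ * ε p g))
        = ∑ σ, ∑ τ, w σ * ((∏ p ∈ P, Real.exp (β₂ * ε p σ)) *
            ∏ p ∈ P, Real.exp (β₁ * ε p τ)) := by
      rw [Finset.sum_mul_sum]
      exact Finset.sum_congr rfl fun σ _ => Finset.sum_congr rfl fun τ _ => by ring
    have e2 : (∑ g, w g * ∏ p ∈ P, Real.exp (β₁ * ε p g)) *
          (∑ g, ∏ p ∈ P, Real.exp (β₂ * ε p g))
        = ∑ σ, ∑ τ, w τ * ((∏ p ∈ P, Real.exp (β₂ * ε p σ)) *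
            ∏ p ∈ P, Real.exp (β₁ * ε p τ)) := by
      rw [Finset.sum_mul_sum, Finset.sum_comm]
      exact Finset.sum_congr rfl fun σ _ => Finset.sum_congr rfl fun τ _ => by ring
    rw [e1, e2, ← Finset.sum_sub_distrib]
    have e3 : ∀ σ : G, (∑ τ, w σ * ((∏ p ∈ P, Real.exp (β₂ * ε p σ)) *
            ∏ p ∈ P, Real.exp (β₁ * ε p τ)))
          - (∑ τ, w τ * ((∏ p ∈ P, Real.exp (β₂ * ε p σ)) *
            ∏ p ∈ P, Real.exp (β₁ * ε p τ)))
        = ∑ q, (1 - w q) * (w σ * ∏ p ∈ P, Real.exp ((β₂ + β₁ * ε p q) * ε p σ)) := by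
      intro σ
      rw [← Finset.sum_sub_distrib]
      have hre : ∀ f : G → ℝ, ∑ τ : G, f τ = ∑ q : G, f (mul σ q) :=
        fun f =>
          (Fintype.sum_bijective (mul σ) (hbij σ) (fun q => f (mul σ q)) f fun g => rfl).symm
      rw [hre (fun τ => w σ * ((∏ p ∈ P, Real.exp (β₂ * ε p σ)) *
            ∏ p ∈ P, Real.exp (β₁ * ε p τ))
          - w τ * ((∏ p ∈ P, Real.exp (β₂ * ε p σ)) *
            ∏ p ∈ P, Real.exp (β₁ * ε p τ)))]
      refine Finset.sum_congr rfl fun q _ => ?_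
      have hwq : w (mul σ q) = w σ * w q := hw.1 σ q
      have hprod : (∏ p ∈ P, Real.exp (β₂ * ε p σ)) *
            ∏ p ∈ P, Real.exp (β₁ * ε p (mul σ q))
          = ∏ p ∈ P, Real.exp ((β₂ + β₁ * ε p q) * ε p σ) := by
        rw [← Finset.prod_mul_distrib]
        refine Finset.prod_congr rfl fun p hp => ?_
        rw [← Real.exp_add, (hε p hp).1]
        ring_nf
      rw [hwq, hprod]
      ring
    simp only [e3]
    rw [Finset.sum_comm]
    refine Finset.sum_congr rfl fun q _ => ?_
    rw [Finset.mul_sum]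
  rw [key]
  refine Finset.sum_nonneg fun q _ => mul_nonneg ?_ ?_
  · rcases hw.2 q with h | h <;> rw [h] <;> norm_num
  · refine griffiths1 hbij P ε hε hw (fun p => β₂ + β₁ * ε p q) fun p hp => ?_
    show 0 ≤ β₂ + β₁ * ε p q
    rcases (hε p hp).2 q with h | h <;> rw [h] <;> nlinarith

lemma rho_vals (x : ZMod 2) : rho x = 1 ∨ rho x = -1 := by
  unfold rho; split <;> simp

lemma rho_add (a b : ZMod 2) : rho (a + b) = rho a * rho b := by
  have h : ∀ x : ZMod 2, x = 0 ∨ x = 1 := by decide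
  have h11 : (1 : ZMod 2) + 1 = 0 := by decide
  rcases h a with ha | ha <;> rcases h b with hb | hb <;>
    simp [ha, hb, rho, h11]

lemma box_finite (m N : ℕ) : {x : Site m | inBox m N x}.Finite := by
  apply Set.Finite.subset (Set.Finite.pi fun i : Fin m => Set.finite_Icc (-(N : ℤ)) N)
  intro x hx
  simp only [Set.mem_pi, Set.mem_univ, Set.mem_Icc, forall_true_left]
  intro i
  exact abs_le.mp (hx i)

lemma C1_finite (m N : ℕ) : (C1 m N).Finite := by
  have h : ((fun e : OEdge m => (e.base, e.dir, e.ori)) '' C1 m N).Finite := by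
    apply Set.Finite.subset ((box_finite m N).prod (Set.finite_univ (α := Fin m × Bool)))
    rintro ⟨x, d, o⟩ ⟨e, he, heq⟩
    obtain ⟨h1, h2, h3⟩ := Prod.mk.injEq .. ▸ heq
    exact ⟨h1 ▸ he.1, trivial⟩
  refine Set.Finite.of_finite_image h ?_
  intro a _ b _ hab
  cases a; cases b; simp_all

lemma C2_finite (m N : ℕ) : (C2 m N).Finite := by
  have h : ((fun p : OPlaq m => (p.base, p.dir1, p.dir2, p.ori)) '' C2 m N).Finite := by
    apply Set.Finite.subset
      ((box_finite m N).prod (Set.finite_univ (α := Fin m × Fin m × Bool)))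
    rintro ⟨x, d1, d2, o⟩ ⟨p, hp, heq⟩
    obtain ⟨h1, -⟩ := Prod.mk.injEq .. ▸ heq
    refine ⟨h1 ▸ hp.2 p.base ?_, trivial⟩
    simp [OPlaq.corners]
  refine Set.Finite.of_finite_image h ?_
  intro a _ b _ hab
  cases a; cases b; simp_all

lemma Omega1_finite (m N : ℕ) : (Omega1 m N).Finite := by
  rw [← Set.finite_coe_iff]
  have : Finite ↥(C1 m N) := (C1_finite m N).to_subtype
  refine Finite.of_injective
    (fun σ : ↥(Omega1 m N) => fun e : ↥(C1 m N) => σ.1 e.1) ?_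
  intro σ τ h
  apply Subtype.ext
  funext e
  by_cases he : e ∈ C1 m N
  · exact congrFun h ⟨e, he⟩
  · rw [σ.2.1 e he, τ.2.1 e he]

lemma Omega1_zero (m N : ℕ) : (0 : OEdge m → ZMod 2) ∈ Omega1 m N :=
  ⟨fun _ _ => rfl, fun _ => by simp⟩

lemma Omega1_add (m N : ℕ) {σ τ : OEdge m → ZMod 2}
    (hσ : σ ∈ Omega1 m N) (hτ : τ ∈ Omega1 m N) : σ + τ ∈ Omega1 m N := by
  constructor
  · intro e he
    show σ e + τ e = 0
    rw [hσ.1 e he, hτ.1 e he, add_zero]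
  · intro e
    show σ (OEdge.neg e) + τ (OEdge.neg e) = -(σ e + τ e)
    rw [hσ.2 e, hτ.2 e]; ring

lemma dOne_add {m : ℕ} (σ τ : OEdge m → ZMod 2) (p : OPlaq m) :
    dOne (σ + τ) p = dOne σ p + dOne τ p := by
  unfold dOne
  induction p.bdry with
  | nil => simp
  | cons a l ih => simp only [List.map_cons, List.sum_cons, ih, Pi.add_apply]; ring

lemma wilson_mul (m : ℕ) (γ : OEdge m → ℤ) (hfin : (Function.support γ).Finite)
    (σ τ : OEdge m → ZMod 2) :
    wilson m γ (σ + τ) = wilson m γ σ * wilson m γ τ := by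
  unfold wilson
  have hS : {e : OEdge m | γ e ≠ 0 ∧ e.ori = true}.Finite :=
    hfin.subset fun e he => he.1
  rw [← finprod_mem_mul_distrib hS]
  exact finprod_mem_congr rfl fun e _ => by rw [Pi.add_apply, rho_add]

lemma wilson_vals (m : ℕ) (γ : OEdge m → ℤ) (hfin : (Function.support γ).Finite)
    (σ : OEdge m → ZMod 2) : wilson m γ σ = 1 ∨ wilson m γ σ = -1 := by
  unfold wilson
  have hS : {e : OEdge m | γ e ≠ 0 ∧ e.ori = true}.Finite :=
    hfin.subset fun e he => he.1
  rw [finprod_mem_eq_prod _ (hS.inter_of_left _)]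
  exact Finset.prod_induction _ (fun x : ℝ => x = 1 ∨ x = -1)
    (fun a b ha hb => by rcases ha with h | h <;> rcases hb with h' | h' <;> simp [h, h'])
    (Or.inl rfl) (fun e _ => rho_vals (σ e))


/-- **Monotonicity in the inverse temperature** (Proposition 7(ii)): for every loop `γ`
supported in `B_N` with `𝒞_γ` nonempty, `β ↦ E_{N,β}[W_γ]` is nondecreasing on `[0,∞)`. -/
theorem wilson_monotone (m N : ℕ) (hm : 3 ≤ m) (hN : 1 ≤ N)
    (γ : OEdge m → ℤ) (hγ : LoopIn m N γ) (hne : (CurSet m N γ).Nonempty) :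
    ∀ β₁ β₂ : ℝ, 0 ≤ β₁ → β₁ ≤ β₂ → Ewilson m N β₁ γ ≤ Ewilson m N β₂ γ := by
  intro β₁ β₂ h0 h12
  classical
  have hΩ := Omega1_finite m N
  have hC2 := C2_finite m N
  haveI : Finite ↥(Omega1 m N) := hΩ.to_subtype
  haveI : Fintype ↥(Omega1 m N) := Fintype.ofFinite _
  let G := ↥(Omega1 m N)
  let mulG : G → G → G := fun a b => ⟨a.1 + b.1, Omega1_add m N a.2 b.2⟩
  have hbij : ∀ a, Function.Bijective (mulG a) := by
    intro a
    have hinv : ∀ b, mulG a (mulG a b) = b := by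
      intro b
      apply Subtype.ext
      funext e
      show a.1 e + (a.1 e + b.1 e) = b.1 e
      have h2 : ∀ x y : ZMod 2, x + (x + y) = y := by decide
      exact h2 _ _
    exact Function.bijective_iff_has_inverse.mpr ⟨mulG a, hinv, hinv⟩
  let Pfin : Finset (OPlaq m) := hC2.toFinset
  let ε : OPlaq m → G → ℝ := fun p g => rho (dOne g.1 p)
  let w : G → ℝ := fun g => wilson m γ g.1
  have hε : ∀ p ∈ Pfin, IsChar mulG (ε p) := by
    intro p _
    refine ⟨fun a b => ?_, fun a => rho_vals _⟩
    show rho (dOne (a.1 + b.1) p) = rho (dOne a.1 p) * rho (dOne b.1 p)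
    rw [dOne_add, rho_add]
  have hw : IsChar mulG w :=
    ⟨fun a b => wilson_mul m γ hγ.1.finite_supp a.1 b.1,
      fun a => wilson_vals m γ hγ.1.finite_supp a.1⟩
  have hsum : ∀ f : (OEdge m → ZMod 2) → ℝ,
      (∑ᶠ σ ∈ Omega1 m N, f σ) = ∑ g : G, f g.1 := by
    intro f
    rw [finsum_mem_eq_finite_toFinset_sum f hΩ]
    exact Finset.sum_subtype _ (fun x => hΩ.mem_toFinset) f
  have hact : ∀ (β : ℝ) (σ : OEdge m → ZMod 2),
      Real.exp (-β * action m N σ) = ∏ p ∈ Pfin, Real.exp (β * rho (dOne σ p)) := by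
    intro β σ
    unfold action
    rw [finsum_mem_eq_finite_toFinset_sum _ hC2]
    have hh : -β * -(∑ p ∈ hC2.toFinset, rho (dOne σ p))
        = ∑ p ∈ Pfin, β * rho (dOne σ p) := by
      rw [neg_mul_neg, Finset.mul_sum]
    rw [hh, Real.exp_sum]
  have hEw : ∀ β : ℝ, Ewilson m N β γ =
      (∑ g : G, w g * ∏ p ∈ Pfin, Real.exp (β * ε p g)) /
        (∑ g : G, ∏ p ∈ Pfin, Real.exp (β * ε p g)) := by
    intro β
    unfold Ewilson Eexp
    rw [hsum, hsum]
    congr 1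
    · exact Finset.sum_congr rfl fun g _ => by rw [hact]
    · exact Finset.sum_congr rfl fun g _ => hact β g.1
  have hZpos : ∀ β : ℝ, 0 < ∑ g : G, ∏ p ∈ Pfin, Real.exp (β * ε p g) := by
    intro β
    refine Finset.sum_pos (fun g _ => Finset.prod_pos fun p _ => Real.exp_pos _)
      ⟨⟨0, Omega1_zero m N⟩, Finset.mem_univ _⟩
  rw [hEw β₁, hEw β₂, div_le_div_iff₀ (hZpos β₁) (hZpos β₂)]
  exact griffiths_mono hbij Pfin ε hε hw h0 h12

end LGT
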